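/- Let N ≥ 1 be an integer, θ_j = 2πj/N for j = 1,…,N, ρ > 0, and μ ∈ ℂ with |μ| > ρ. Then for any integer p with 0 ≤ p ≤ N - 1, (1/N) ∑_{j=1}^N (ρ e^{iθ_j})^p · (ρ e^{iθ_j})/(ρ e^{iθ_j} - μ) = -μ^p · (ρ/μ)^N / (1 - (ρ/μ)^N). -/

import Mathlib

theorem stmt3 (N : ℕ) (hN : 0 < N) (ρ : ℝ) (hρ : 0 < ρ) (μ : ℂ)
    (hμ : ρ < ‖μ‖) (p : ℕ) (hp : p ≤ N - 1)
    (θ : ℕ → ℝ) (hθ : ∀ j, θ j = 2 * Real.pi * j / N) :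
    (1 / N : ℂ) * ∑ j ∈ Finset.Icc 1 N,
        ((ρ : ℂ) * Complex.exp (Complex.I * θ j)) ^ p *
          (((ρ : ℂ) * Complex.exp (Complex.I * θ j)) /
            ((ρ : ℂ) * Complex.exp (Complex.I * θ j) - μ))
      = -μ ^ p * ((ρ : ℂ) / μ) ^ N / (1 - ((ρ : ℂ) / μ) ^ N) := by
  have hμ0 : μ ≠ 0 := by
    intro h; rw [h] at hμ; simp at hμ; linarith
  have hNC : (N : ℂ) ≠ 0 := Nat.cast_ne_zero.mpr hN.ne'
  have hNR : (N : ℝ) ≠ 0 := Nat.cast_ne_zero.mpr hN.ne'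
  set ζ : ℂ := Complex.exp (2 * Real.pi * Complex.I / N) with hζdef
  have hζabs : ‖ζ‖ = 1 := by
    rw [hζdef]
    rw [show (2 * Real.pi * Complex.I / N : ℂ) = (2 * Real.pi / N : ℝ) * Complex.I by
      push_cast; ring]
    exact Complex.norm_exp_ofReal_mul_I _
  have hζpow : ∀ j : ℕ, Complex.exp (Complex.I * θ j) = ζ ^ j := by
    intro j
    rw [hθ, hζdef, ← Complex.exp_nat_mul]
    congr 1
    push_cast
    field_simp
  have hζN : ζ ^ N = 1 := by
    rw [hζdef, ← Complex.exp_nat_mul,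
      show (N : ℂ) * (2 * Real.pi * Complex.I / N) = 2 * Real.pi * Complex.I by
        field_simp]
    exact Complex.exp_two_pi_mul_I
  -- ζ^m ≠ 1 for 0 < m < 2N, m ≠ N
  have hζne : ∀ m : ℕ, 0 < m → m < 2 * N → m ≠ N → ζ ^ m ≠ 1 := by
    intro m hm1 hm2 hm3 h
    rw [hζdef, ← Complex.exp_nat_mul, Complex.exp_eq_one_iff] at h
    obtain ⟨n, hn⟩ := h
    rw [show ((m : ℂ)) * (2 * Real.pi * Complex.I / N) = ((m : ℝ) / N) * (2 * Real.pi * Complex.I) by push_cast; field_simp] at hn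
    have h2 : (2 * Real.pi * Complex.I : ℂ) ≠ 0 := by
      simp [Real.pi_ne_zero, Complex.I_ne_zero]
    have : ((m : ℝ) / N : ℂ) = (n : ℂ) := mul_right_cancel₀ h2 hn
    have hr : (m : ℝ) / N = (n : ℝ) := by exact_mod_cast this
    have hmn : (m : ℝ) = n * N := by field_simp at hr; linarith
    have hmn' : (m : ℤ) = n * N := by exact_mod_cast hmn
    have hN' : (0:ℤ) < N := by exact_mod_cast hN
    have h1 : 0 < n := by nlinarith
    have h2 : n < 2 := by nlinarith
    have : n = 1 := by omega
    rw [this, one_mul] at hmn'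
    omega
  -- sum of powers of roots of unity
  have hsum0 : ∀ m : ℕ, 0 < m → m < 2 * N → m ≠ N →
      ∑ j ∈ Finset.Icc 1 N, ((ζ ^ j) ^ m) = 0 := by
    intro m hm1 hm2 hm3
    have hw : ζ ^ m ≠ 1 := hζne m hm1 hm2 hm3
    have hwN : (ζ ^ m) ^ N = 1 := by
      rw [← pow_mul, mul_comm, pow_mul, hζN, one_pow]
    calc ∑ j ∈ Finset.Icc 1 N, (ζ ^ j) ^ m
        = ∑ j ∈ Finset.Icc 1 N, (ζ ^ m) ^ j :=
          Finset.sum_congr rfl (fun j _ => by rw [← pow_mul, ← pow_mul, mul_comm])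
      _ = ∑ j ∈ Finset.range N, (ζ ^ m) ^ (1 + j) := by
          rw [show Finset.Icc 1 N = Finset.Ico 1 (N+1) by rw [Finset.Ico_add_one_right_eq_Icc],
            Finset.sum_Ico_eq_sum_range]
          simp
      _ = (ζ ^ m) * ∑ j ∈ Finset.range N, (ζ ^ m) ^ j := by
          rw [Finset.mul_sum]
          exact Finset.sum_congr rfl (fun j _ => by rw [pow_add, pow_one])
      _ = 0 := by
          rw [geom_sum_eq hw, hwN]
          simp
  have habsμ : 0 < ‖μ‖ := lt_trans hρ hμ
  -- sum of N-th powers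
  have hsumN : ∑ j ∈ Finset.Icc 1 N, ((ζ ^ j) ^ N) = (N : ℂ) := by
    have : ∀ j ∈ Finset.Icc 1 N, ((ζ ^ j) ^ N) = 1 := by
      intro j _
      rw [← pow_mul, mul_comm, pow_mul, hζN, one_pow]
    rw [Finset.sum_congr rfl this]
    simp
  set D : ℂ := (ρ : ℂ) ^ N - μ ^ N with hDdef
  have habsρN : ‖(ρ:ℂ) ^ N‖ = ρ ^ N := by
    rw [norm_pow, Complex.norm_real, Real.norm_eq_abs, abs_of_pos hρ]
  have habsμN : ‖μ ^ N‖ = ‖μ‖ ^ N := by rw [norm_pow]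
  have hD : D ≠ 0 := by
    rw [hDdef, sub_ne_zero]
    intro h
    have := congrArg (‖·‖) h
    rw [habsρN, habsμN] at this
    have h2 : ρ ^ N < ‖μ‖ ^ N := pow_lt_pow_left₀ hμ (le_of_lt hρ) hN.ne'
    linarith
  -- per-term expansion
  have hterm : ∀ j : ℕ,
      ((ρ : ℂ) * ζ ^ j) ^ p * (((ρ : ℂ) * ζ ^ j) / ((ρ : ℂ) * ζ ^ j - μ))
        = (∑ k ∈ Finset.range N,
            (ρ : ℂ) ^ (p + 1 + k) * μ ^ (N - 1 - k) * (ζ ^ j) ^ (p + 1 + k)) / D := by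
    intro j
    set z : ℂ := (ρ : ℂ) * ζ ^ j with hz
    have hzabs : ‖z‖ = ρ := by
      rw [hz, norm_mul, Complex.norm_real, Real.norm_eq_abs, abs_of_pos hρ, norm_pow, hζabs, one_pow, mul_one]
    have hzμ : z - μ ≠ 0 := by
      rw [sub_ne_zero]
      intro h
      rw [h] at hzabs
      linarith
    have hzN : z ^ N = (ρ : ℂ) ^ N := by
      rw [hz, mul_pow, ← pow_mul, mul_comm j N, pow_mul, hζN, one_pow, mul_one]
    have hSD : (∑ k ∈ Finset.range N, z ^ k * μ ^ (N - 1 - k)) * (z - μ) = D := by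
      rw [geom_sum₂_mul, hzN]
    have h1 : z / (z - μ) = (z * ∑ k ∈ Finset.range N, z ^ k * μ ^ (N - 1 - k)) / D := by
      rw [div_eq_div_iff hzμ hD, ← hSD]
      ring
    rw [h1, ← mul_div_assoc, Finset.mul_sum, Finset.mul_sum]
    congr 1
    refine Finset.sum_congr rfl fun k _ => ?_
    simp only [hz, mul_pow, pow_add, pow_one]
    ring
  -- rewrite the whole sum
  have hmain : ∑ j ∈ Finset.Icc 1 N,
      ((ρ : ℂ) * Complex.exp (Complex.I * θ j)) ^ p *
        (((ρ : ℂ) * Complex.exp (Complex.I * θ j)) /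
          ((ρ : ℂ) * Complex.exp (Complex.I * θ j) - μ))
      = (ρ : ℂ) ^ N * μ ^ p * (N : ℂ) / D := by
    calc ∑ j ∈ Finset.Icc 1 N,
        ((ρ : ℂ) * Complex.exp (Complex.I * θ j)) ^ p *
          (((ρ : ℂ) * Complex.exp (Complex.I * θ j)) /
            ((ρ : ℂ) * Complex.exp (Complex.I * θ j) - μ))
        = ∑ j ∈ Finset.Icc 1 N, (∑ k ∈ Finset.range N,
            (ρ : ℂ) ^ (p + 1 + k) * μ ^ (N - 1 - k) * (ζ ^ j) ^ (p + 1 + k)) / D := by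
          refine Finset.sum_congr rfl fun j _ => ?_
          rw [hζpow j]
          exact hterm j
      _ = (∑ k ∈ Finset.range N,
            (ρ : ℂ) ^ (p + 1 + k) * μ ^ (N - 1 - k) *
              ∑ j ∈ Finset.Icc 1 N, (ζ ^ j) ^ (p + 1 + k)) / D := by
          rw [← Finset.sum_div, Finset.sum_comm]
          congr 1
          refine Finset.sum_congr rfl fun k _ => ?_
          rw [Finset.mul_sum]
      _ = (ρ : ℂ) ^ N * μ ^ p * (N : ℂ) / D := by
          congr 1
          rw [Finset.sum_eq_single (N - 1 - p)]
          · have e1 : p + 1 + (N - 1 - p) = N := by omega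
            have e2 : N - 1 - (N - 1 - p) = p := by omega
            rw [e1, e2, hsumN]
          · intro k hk hkne
            have hk' : k < N := Finset.mem_range.mp hk
            rw [hsum0 (p + 1 + k) (by omega) (by omega) (by omega)]
            ring
          · intro h
            exact absurd (Finset.mem_range.mpr (by omega)) h
  rw [hmain]
  -- final algebra
  have hq : ((ρ : ℂ) / μ) ^ N ≠ 1 := by
    intro h
    have := congrArg (‖·‖) h
    rw [norm_pow, norm_div, Complex.norm_real, Real.norm_eq_abs, abs_of_pos hρ, norm_one] at this
    have hlt : (ρ / ‖μ‖) ^ N < 1 :=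
      pow_lt_one₀ (by positivity) (by rw [div_lt_one habsμ]; exact hμ) hN.ne'
    linarith
  have hq' : 1 - ((ρ : ℂ) / μ) ^ N ≠ 0 := sub_ne_zero.mpr (Ne.symm hq)
  have h2 : (1 / (N:ℂ)) * ((ρ:ℂ) ^ N * μ ^ p * (N:ℂ) / D) = (ρ:ℂ) ^ N * μ ^ p / D := by
    field_simp
  rw [h2, div_eq_div_iff hD hq', hDdef]
  field_simp
  have hm : μ ^ N * μ⁻¹ ^ N = 1 := by rw [← mul_pow, mul_inv_cancel₀ hμ0, one_pow]
  linear_combination (-(ρ : ℂ) ^ N) * hm
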